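/- Let z ≥ 0 be an integer and 0 ≤ p ≤ 1. Let X ~ Binomial(z, p) and Y ~ Binomial(z, 1/2), and set X* = max(X, z − X) and Y* = max(Y, z − Y). Then X* stochastically dominates Y*: for every real c, P(X* ≥ c) ≥ P(Y* ≥ c). -/

import Mathlib

/-- The probability mass function of the Binomial(z, p) distribution. -/
def binomPmf (z : ℕ) (p : ℝ) (x : ℕ) : ℝ :=
  (z.choose x : ℝ) * p ^ x * (1 - p) ^ (z - x)

namespace BinomAux

lemma nat1 (z x : ℕ) (hx : 1 ≤ x) (hz : x ≤ z) :
    x * z.choose x = z * (z-1).choose (x-1) := by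
  obtain ⟨x, rfl⟩ : ∃ y, x = y + 1 := ⟨x - 1, by omega⟩
  obtain ⟨z, rfl⟩ : ∃ y, z = y + 1 := ⟨z - 1, by omega⟩
  simp only [Nat.add_sub_cancel]
  have h := Nat.add_one_mul_choose_eq z x
  rw [mul_comm]
  exact h.symm

lemma nat2 (z x : ℕ) (hz : x ≤ z) :
    (z-x) * z.choose x = z * (z-1).choose x := by
  rcases eq_or_lt_of_le hz with rfl | hlt
  · rcases Nat.eq_zero_or_pos x with rfl | hx0
    · simp
    · simp [Nat.choose_eq_zero_of_lt (by omega : x - 1 < x)]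
  · have h := nat1 z (z - x) (by omega) (by omega)
    rw [Nat.choose_symm hz] at h
    have : z - x - 1 = (z-1) - x := by omega
    rw [this, Nat.choose_symm (by omega : x ≤ z - 1)] at h
    exact h

lemma sum_pmf (z : ℕ) (p : ℝ) :
    ∑ x ∈ Finset.range (z + 1), binomPmf z p x = 1 := by
  have h := add_pow p (1-p) z
  simp only [add_sub_cancel, one_pow] at h
  rw [eq_comm] at h
  rw [show (1:ℝ) = (p + (1-p))^z by ring_nf, add_pow]
  exact Finset.sum_congr rfl fun x _ => by unfold binomPmf; ring

/-- the telescoping derivative of the binomial upper tail -/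
lemma tail_hasDerivAt (z m : ℕ) (hm1 : 1 ≤ m) (hmz : m ≤ z) (p : ℝ) :
    HasDerivAt (fun p : ℝ => ∑ x ∈ Finset.Ico m (z+1),
        (z.choose x : ℝ) * (p ^ x * (1 - p) ^ (z - x)))
      ((z : ℝ) * ((z-1).choose (m-1) : ℝ) * (p ^ (m-1) * (1 - p) ^ (z - m))) p := by
  set e : ℕ → ℝ := fun x => (z : ℝ) * ((z-1).choose (x-1) : ℝ) * (p ^ (x-1) * (1 - p) ^ (z - x))
    with he
  have key : ∀ x ∈ Finset.Ico m (z+1),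
      HasDerivAt (fun p : ℝ => (z.choose x : ℝ) * (p ^ x * (1 - p) ^ (z - x)))
        (e x - e (x+1)) p := by
    intro x hx
    simp only [Finset.mem_Ico] at hx
    have hx1 : 1 ≤ x := le_trans hm1 hx.1
    have hxz : x ≤ z := by omega
    have hq : HasDerivAt (fun p : ℝ => 1 - p) (-1) p := by
      simpa using (hasDerivAt_id p).const_sub 1
    have h2 : HasDerivAt (fun p : ℝ => (1 - p) ^ (z - x))
        (((z - x : ℕ) : ℝ) * (1 - p) ^ (z - x - 1) * (-1)) p :=
      (hasDerivAt_pow (z - x) (1 - p)).comp p hq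
    have h1 : HasDerivAt (fun p : ℝ => p ^ x) (((x : ℕ) : ℝ) * p ^ (x - 1)) p :=
      hasDerivAt_pow x p
    have h3 := (h1.fun_mul h2).const_mul (z.choose x : ℝ)
    refine h3.congr_deriv ?_
    symm
    have id1 : (x : ℝ) * (z.choose x : ℝ) = (z : ℝ) * ((z-1).choose (x-1) : ℝ) := by
      exact_mod_cast congrArg (Nat.cast : ℕ → ℝ) (nat1 z x hx1 hxz)
    have id2 : ((z - x : ℕ) : ℝ) * (z.choose x : ℝ) = (z : ℝ) * ((z-1).choose x : ℝ) := by
      exact_mod_cast congrArg (Nat.cast : ℕ → ℝ) (nat2 z x hxz)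
    have e1 : z - (x+1) = z - x - 1 := by omega
    have e2 : (x+1) - 1 = x := by omega
    simp only [he, e1, e2]
    linear_combination (-(p ^ (x-1) * (1 - p) ^ (z - x))) * id1 + (p ^ x * (1 - p) ^ (z - x - 1)) * id2
  have hsum := HasDerivAt.fun_sum key
  refine hsum.congr_deriv ?_
  symm
  rw [Finset.sum_Ico_eq_sum_range]
  have hmz1 : m + (z + 1 - m) = z + 1 := by omega
  have tele := Finset.sum_range_sub' (fun i => e (m + i)) (z + 1 - m)
  simp only [← add_assoc, add_zero, hmz1] at tele
  have hez : e (z+1) = 0 := by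
    have hcz : (z-1).choose ((z+1)-1) = 0 := Nat.choose_eq_zero_of_lt (by omega)
    simp only [he, hcz]
    simp
  rw [tele, hez, sub_zero]

noncomputable def Ffun (z m : ℕ) : ℝ → ℝ := fun p => ∑ x ∈ Finset.Ico m (z+1),
  ((z.choose x : ℝ) * (p ^ x * (1-p) ^ (z-x)) + (z.choose x : ℝ) * ((1-p) ^ x * p ^ (z-x)))

lemma Ffun_hasDeriv (z m : ℕ) (hm1 : 1 ≤ m) (hmz : m ≤ z) (p : ℝ) :
    HasDerivAt (Ffun z m)
      ((z : ℝ) * ((z-1).choose (m-1) : ℝ) * (p ^ (m-1) * (1-p) ^ (z-m))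
        - (z : ℝ) * ((z-1).choose (m-1) : ℝ) * ((1-p) ^ (m-1) * p ^ (z-m))) p := by
  have h1 := tail_hasDerivAt z m hm1 hmz p
  have hq : HasDerivAt (fun p : ℝ => 1 - p) (-1) p := by
    simpa using (hasDerivAt_id p).const_sub 1
  have h2 := (tail_hasDerivAt z m hm1 hmz (1-p)).comp p hq
  simp only [Function.comp_def, sub_sub_cancel] at h2
  have h3 := h1.fun_add h2
  have hfun : (fun p : ℝ => (∑ x ∈ Finset.Ico m (z+1),
        (z.choose x : ℝ) * (p ^ x * (1 - p) ^ (z - x)))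
      + (∑ x ∈ Finset.Ico m (z+1),
        (z.choose x : ℝ) * ((1-p) ^ x * p ^ (z - x)))) = Ffun z m := by
    funext p
    rw [Ffun, ← Finset.sum_add_distrib]
  rw [hfun] at h3
  refine h3.congr_deriv ?_
  ring

lemma Ffun_symm (z m : ℕ) (p : ℝ) : Ffun z m (1 - p) = Ffun z m p := by
  unfold Ffun
  refine Finset.sum_congr rfl fun x _ => ?_
  simp only [sub_sub_cancel]
  ring

lemma Ffun_ge (z m : ℕ) (hm1 : 1 ≤ m) (hmz : m ≤ z) (h2m : z < 2*m)
    (p : ℝ) (hp0 : 0 ≤ p) (hp1 : p ≤ 1) : Ffun z m (1/2) ≤ Ffun z m p := by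
  have hderiv : ∀ x : ℝ, x ∈ Set.Icc (1/2 : ℝ) 1 → 0 ≤ deriv (Ffun z m) x := by
    intro x hx
    obtain ⟨hx0, hx1⟩ := hx
    rw [(Ffun_hasDeriv z m hm1 hmz x).deriv]
    have hq0 : (0:ℝ) ≤ 1 - x := by linarith
    have hqx : 1 - x ≤ x := by linarith
    have key : (1-x) ^ (m-1) * x ^ (z-m) ≤ x ^ (m-1) * (1-x) ^ (z-m) := by
      have e : m - 1 = (z - m) + (2*m - 1 - z) := by omega
      rw [e, pow_add, pow_add]
      calc ((1-x) ^ (z-m) * (1-x) ^ (2*m-1-z)) * x ^ (z-m)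
          = ((1-x) ^ (z-m) * x ^ (z-m)) * (1-x) ^ (2*m-1-z) := by ring
        _ ≤ ((1-x) ^ (z-m) * x ^ (z-m)) * x ^ (2*m-1-z) := by
            apply mul_le_mul_of_nonneg_left (pow_le_pow_left₀ hq0 hqx _)
            positivity
        _ = (x ^ (z-m) * x ^ (2*m-1-z)) * (1-x) ^ (z-m) := by ring
    have hC : (0:ℝ) ≤ (z : ℝ) * ((z-1).choose (m-1) : ℝ) := by positivity
    nlinarith [key, hC]
  have hmono : MonotoneOn (Ffun z m) (Set.Icc (1/2 : ℝ) 1) := by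
    apply monotoneOn_of_deriv_nonneg (convex_Icc _ _)
    · exact fun x _ => ((Ffun_hasDeriv z m hm1 hmz x).differentiableAt).continuousAt.continuousWithinAt
    · exact fun x _ => ((Ffun_hasDeriv z m hm1 hmz x).differentiableAt).differentiableWithinAt
    · intro x hx
      exact hderiv x (interior_subset hx)
  rcases le_total (1/2 : ℝ) p with h | h
  · exact hmono (by constructor <;> norm_num) ⟨h, hp1⟩ h
  · rw [← Ffun_symm z m p]
    exact hmono (by constructor <;> norm_num) ⟨by linarith, by linarith⟩ (by linarith)

lemma lower_eq (z m : ℕ) (hmz : m ≤ z) (p : ℝ) :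
    ∑ x ∈ Finset.range (z - m + 1), binomPmf z p x
      = ∑ x ∈ Finset.Ico m (z+1), (z.choose x : ℝ) * ((1-p) ^ x * p ^ (z - x)) := by
  refine Finset.sum_nbij' (fun x => z - x) (fun x => z - x) ?_ ?_ ?_ ?_ ?_
  · intro a ha
    simp only [Finset.mem_range] at ha
    simp only [Finset.mem_Ico]
    omega
  · intro a ha
    simp only [Finset.mem_Ico] at ha
    simp only [Finset.mem_range]
    omega
  · intro a ha
    simp only [Finset.mem_range] at ha
    show z - (z - a) = a
    omega
  · intro a ha
    simp only [Finset.mem_Ico] at ha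
    show z - (z - a) = a
    omega
  · intro a ha
    simp only [Finset.mem_range] at ha
    have haz : a ≤ z := by omega
    unfold binomPmf
    rw [Nat.choose_symm haz, Nat.sub_sub_self haz]
    ring

end BinomAux

theorem binomial_max_stochastically_dominates_uniform
    (z : ℕ) (p : ℝ) (hp0 : 0 ≤ p) (hp1 : p ≤ 1) (c : ℝ) :
    ∑ x ∈ (Finset.range (z + 1)).filter
        (fun x : ℕ => c ≤ max (x : ℝ) ((z : ℝ) - x)),
      binomPmf z p x ≥
    ∑ x ∈ (Finset.range (z + 1)).filter
        (fun x : ℕ => c ≤ max (x : ℝ) ((z : ℝ) - x)),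
      binomPmf z (1 / 2) x := by
  classical
  by_cases hc1 : 2*c ≤ (z:ℝ)
  · have hfull : (Finset.range (z + 1)).filter
        (fun x : ℕ => c ≤ max (x : ℝ) ((z : ℝ) - x)) = Finset.range (z+1) := by
      apply Finset.filter_true_of_mem
      intro x hx
      simp only [Finset.mem_range] at hx
      have hxz : (x:ℝ) ≤ z := by exact_mod_cast Nat.lt_succ_iff.mp hx
      rcases le_total (x:ℝ) ((z:ℝ) - x) with h | h
      · rw [max_eq_right h]; linarith
      · rw [max_eq_left h]; linarith
    rw [hfull, BinomAux.sum_pmf, BinomAux.sum_pmf]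
  · push_neg at hc1
    by_cases hc2 : (z:ℝ) < c
    · have hempty : (Finset.range (z + 1)).filter
          (fun x : ℕ => c ≤ max (x : ℝ) ((z : ℝ) - x)) = ∅ := by
        apply Finset.filter_false_of_mem
        intro x hx
        simp only [Finset.mem_range] at hx
        have hxz : (x:ℝ) ≤ z := by exact_mod_cast Nat.lt_succ_iff.mp hx
        have hxnn : (0:ℝ) ≤ x := Nat.cast_nonneg x
        push_neg
        rcases le_total (x:ℝ) ((z:ℝ) - x) with h | h
        · rw [max_eq_right h]; linarith
        · rw [max_eq_left h]; linarith
      rw [hempty]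
      simp
    · push_neg at hc2
      set m := ⌈c⌉₊ with hm
      have hzc : (0:ℝ) ≤ z := Nat.cast_nonneg z
      have hcpos : 0 < c := by linarith
      have hm1 : 1 ≤ m := Nat.one_le_ceil_iff.mpr hcpos
      have hmz : m ≤ z := Nat.ceil_le.mpr hc2
      have h2m : z < 2*m := by
        have h1 : c ≤ (m:ℝ) := Nat.le_ceil c
        have : (z:ℝ) < 2*(m:ℝ) := by linarith
        exact_mod_cast this
      have hsplit : (Finset.range (z + 1)).filter
          (fun x : ℕ => c ≤ max (x : ℝ) ((z : ℝ) - x))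
          = Finset.range (z - m + 1) ∪ Finset.Ico m (z+1) := by
        ext x
        simp only [Finset.mem_filter, Finset.mem_range, Finset.mem_union, Finset.mem_Ico,
          le_max_iff]
        constructor
        · rintro ⟨hxr, hc | hc⟩
          · right
            exact ⟨Nat.ceil_le.mpr hc, hxr⟩
          · left
            have hxz : x ≤ z := by omega
            have h1 : c ≤ ((z - x : ℕ) : ℝ) := by
              rw [Nat.cast_sub hxz]
              exact hc
            have h2 : m ≤ z - x := Nat.ceil_le.mpr h1
            omega
        · rintro (hx | ⟨hmx, hxr⟩)
          · refine ⟨by omega, Or.inr ?_⟩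
            have h1 : m + x ≤ z := by omega
            have h2 : (m:ℝ) + x ≤ z := by exact_mod_cast h1
            have h3 : c ≤ (m:ℝ) := Nat.le_ceil c
            linarith
          · refine ⟨hxr, Or.inl ?_⟩
            have h1 : (m:ℝ) ≤ x := by exact_mod_cast hmx
            have h2 : c ≤ (m:ℝ) := Nat.le_ceil c
            linarith
      have hdisj : Disjoint (Finset.range (z - m + 1)) (Finset.Ico m (z+1)) := by
        rw [Finset.disjoint_left]
        intro a ha hb
        simp only [Finset.mem_range] at ha
        simp only [Finset.mem_Ico] at hb
        omega
      have hrw : ∀ q : ℝ, ∑ x ∈ Finset.range (z - m + 1), binomPmf z q x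
          + ∑ x ∈ Finset.Ico m (z+1), binomPmf z q x = BinomAux.Ffun z m q := by
        intro q
        rw [BinomAux.lower_eq z m hmz q, BinomAux.Ffun, ← Finset.sum_add_distrib]
        refine Finset.sum_congr rfl fun x _ => ?_
        unfold binomPmf
        ring
      rw [hsplit, Finset.sum_union hdisj, Finset.sum_union hdisj, hrw p, hrw (1/2)]
      exact BinomAux.Ffun_ge z m hm1 hmz h2m p hp0 hp1
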